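/- Let s > 0 and a > 1 be real, let B ≥ 1 be an integer, and let T_1, …, T_B be independent, identically distributed real random variables, each with the Pareto distribution Pareto(s, a). Then E[max(T_1, …, T_B)] = s · Γ(B+1) · Γ(1 − 1/a) / Γ(B + 1 − 1/a), where Γ is the Gamma function. In particular, with s = Nσ/B and a = Nα/B (where B divides N and Nα > B), the average job compute time with B balanced non-overlapping batches and Pareto(σ, α) task service times equals (Nσ/B) · Γ(B+1) · Γ(1 − B/(Nα)) / Γ(B + 1 − B/(Nα)). -/

import Mathlib

open MeasureTheory ProbabilityTheory Finset Set

lemma complex_eq_real_on (u v : ℝ) :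
    Set.EqOn (fun x : ℝ => (x:ℂ)^(u-1:ℂ) * (1-x:ℂ)^(v-1:ℂ))
      (fun x : ℝ => ((x^(u-1) * (1-x)^(v-1) : ℝ) : ℂ)) (Set.Icc 0 1) := by
  intro x hx
  simp only [Complex.ofReal_mul]
  rw [Complex.ofReal_cpow hx.1, Complex.ofReal_cpow (by linarith [hx.2] : (0:ℝ) ≤ 1 - x)]
  push_cast
  ring_nf

lemma real_beta_integral {u v : ℝ} (hu : 0 < u) (hv : 0 < v) :
    (∫ x in (0:ℝ)..1, x^(u-1) * (1-x)^(v-1))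
      = Real.Gamma u * Real.Gamma v / Real.Gamma (u+v) := by
  have key := Complex.Gamma_mul_Gamma_eq_betaIntegral (s := (u:ℂ)) (t := (v:ℂ))
    (by simpa using hu) (by simpa using hv)
  rw [Complex.betaIntegral] at key
  have : (∫ x in (0:ℝ)..1, (x:ℂ)^(u-1:ℂ) * (1-x:ℂ)^(v-1:ℂ))
      = ((∫ x in (0:ℝ)..1, x^(u-1) * (1-x)^(v-1) : ℝ) : ℂ) := by
    rw [intervalIntegral.integral_congr (g := fun x : ℝ => ((x^(u-1) * (1-x)^(v-1) : ℝ) : ℂ))]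
    · exact intervalIntegral.integral_ofReal
    · simpa [Set.uIcc_of_le (by norm_num : (0:ℝ) ≤ 1)] using complex_eq_real_on u v
  rw [this] at key
  have key' : Real.Gamma u * Real.Gamma v
      = Real.Gamma (u+v) * ∫ x in (0:ℝ)..1, x^(u-1) * (1-x)^(v-1) := by
    apply Complex.ofReal_injective
    rw [show ((u:ℂ)+(v:ℂ)) = ((u+v:ℝ):ℂ) by push_cast; ring] at key
    simp only [Complex.Gamma_ofReal] at key
    push_cast
    exact key
  have hG : Real.Gamma (u+v) ≠ 0 := (Real.Gamma_pos_of_pos (by linarith)).ne'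
  field_simp
  linarith [key']

lemma real_beta_integrable {u v : ℝ} (hu : 0 < u) (hv : 0 < v) :
    IntegrableOn (fun x => x^(u-1) * (1-x)^(v-1)) (Set.Ioc (0:ℝ) 1) := by
  have h := Complex.betaIntegral_convergent (u := (u:ℂ)) (v := (v:ℂ))
    (by simpa using hu) (by simpa using hv)
  have h2 : IntegrableOn (fun x : ℝ => (x:ℂ)^(u-1:ℂ) * (1-x:ℂ)^(v-1:ℂ)) (Set.Ioc (0:ℝ) 1) :=
    (intervalIntegrable_iff_integrableOn_Ioc_of_le (by norm_num)).mp h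
  have h3 := h2.congr_fun (fun x hx =>
    complex_eq_real_on u v (Set.mem_Icc.mpr ⟨hx.1.le, hx.2⟩)) measurableSet_Ioc
  have h4 := h3.re
  apply (integrableOn_congr_fun _ measurableSet_Ioc).mp h4
  intro x _
  simp

lemma pareto_sub (s a : ℝ) (hs : 0 < s) (ha : 1 < a) (k : ℕ) :
    IntegrableOn (fun t => (t/s)^(-a) * (1-(t/s)^(-a))^k) (Set.Ioi s) volume ∧
    ∫ t in Set.Ioi s, (t/s)^(-a) * (1-(t/s)^(-a))^k
      = (s/a) * (Real.Gamma ((k:ℝ)+1) * Real.Gamma (1-1/a)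
          / Real.Gamma (((k:ℝ)+1)+(1-1/a))) := by
  have ha0 : (0:ℝ) < a := by linarith
  have hia : -(1/a) < 0 := by rw [neg_neg_iff_pos]; positivity
  set f : ℝ → ℝ := fun t => 1 - (t/s)^(-a) with hf
  set F' : ℝ → ℝ := fun t => a/s * (t/s)^(-a-1) with hF'
  set g : ℝ → ℝ := fun v => v^k * (1-v)^(-(1/a)) with hg
  have hts : ∀ t ∈ Set.Ioi s, 0 < t / s := fun t ht => div_pos (lt_trans hs ht) hs
  have hts1 : ∀ t ∈ Set.Ioi s, 1 < t / s := fun t ht => (one_lt_div hs).mpr ht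
  have hderiv : ∀ t ∈ Set.Ioi s, HasDerivWithinAt f (F' t) (Set.Ioi s) t := by
    intro t ht
    have h1 : HasDerivAt (fun t : ℝ => t/s) (1/s) t := by
      simpa using (hasDerivAt_id t).div_const s
    have h2 : HasDerivAt (fun x : ℝ => x^(-a)) ((-a) * (t/s)^(-a-1)) (t/s) :=
      Real.hasDerivAt_rpow_const (Or.inl (hts t ht).ne')
    have h3 := (h2.comp t h1).const_sub 1
    have heq : -((-a) * (t/s)^(-a-1) * (1/s)) = F' t := by rw [hF']; ring
    exact (heq ▸ h3).hasDerivWithinAt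
  have hinj : Set.InjOn f (Set.Ioi s) := by
    intro t1 h1 t2 h2 heq
    have heq' : (t1/s)^(-a) = (t2/s)^(-a) := by
      simp only [hf] at heq; linarith
    by_contra hne
    rcases lt_or_gt_of_ne hne with hlt | hlt
    · have := Real.rpow_lt_rpow_of_neg (hts t1 h1)
        ((div_lt_div_iff_of_pos_right hs).mpr hlt) (neg_neg_iff_pos.mpr ha0)
      linarith
    · have := Real.rpow_lt_rpow_of_neg (hts t2 h2)
        ((div_lt_div_iff_of_pos_right hs).mpr hlt) (neg_neg_iff_pos.mpr ha0)
      linarith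
  have himg : f '' Set.Ioi s = Set.Ioo 0 1 := by
    ext v
    constructor
    · rintro ⟨t, ht, rfl⟩
      have hq0 : 0 < (t/s)^(-a) := Real.rpow_pos_of_pos (hts t ht) _
      have hq1 : (t/s)^(-a) < 1 :=
        Real.rpow_lt_one_of_one_lt_of_neg (hts1 t ht) (neg_neg_iff_pos.mpr ha0)
      exact ⟨by simp only [hf]; linarith, by simp only [hf]; linarith⟩
    · rintro ⟨hv0, hv1⟩
      have h1v : (0:ℝ) < 1 - v := by linarith
      have hgt1 : 1 < (1-v)^(-(1/a)) :=
        Real.one_lt_rpow_of_pos_of_lt_one_of_neg h1v (by linarith) hia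
      refine ⟨s * (1-v)^(-(1/a)), lt_mul_of_one_lt_right hs hgt1, ?_⟩
      have hdiv : s * (1-v)^(-(1/a)) / s = (1-v)^(-(1/a)) :=
        mul_div_cancel_left₀ _ hs.ne'
      have hexp : (-(1/a)) * (-a) = 1 := by field_simp
      simp only [hf, hdiv]
      rw [← Real.rpow_mul h1v.le, hexp, Real.rpow_one]
      ring
  have hcong : ∀ t ∈ Set.Ioi s,
      |F' t| • g (f t) = (a/s) * ((t/s)^(-a) * (1-(t/s)^(-a))^k) := by
    intro t ht
    have hq0 : 0 < (t/s)^(-a) := Real.rpow_pos_of_pos (hts t ht) _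
    have hFpos : 0 < F' t :=
      mul_pos (div_pos ha0 hs) (Real.rpow_pos_of_pos (hts t ht) _)
    have hsub : 1 - f t = (t/s)^(-a) := by simp [hf]
    have hexp : (-a) * (-(1/a)) = 1 := by field_simp
    have hpow : ((t/s)^(-a))^(-(1/a)) = t/s := by
      rw [← Real.rpow_mul (hts t ht).le, hexp, Real.rpow_one]
    have hadd : (t/s)^(-a-1) * (t/s) = (t/s)^(-a) := by
      nth_rewrite 2 [← Real.rpow_one (t/s)]
      rw [← Real.rpow_add (hts t ht)]
      norm_num
    rw [smul_eq_mul, abs_of_pos hFpos]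
    simp only [hg, hsub, hpow, hf, sub_sub_cancel, hF']
    calc a/s * (t/s)^(-a-1) * ((1 - (t/s)^(-a))^k * (t/s))
        = a/s * ((t/s)^(-a-1) * (t/s)) * (1 - (t/s)^(-a))^k := by ring
      _ = a/s * ((t/s)^(-a) * (1 - (t/s)^(-a))^k) := by rw [hadd]; ring
  have hu : (0:ℝ) < (k:ℝ)+1 := by positivity
  have hv : (0:ℝ) < 1-1/a := by
    rw [sub_pos, div_lt_one ha0]; exact ha
  have hEq : Set.EqOn (fun x : ℝ => x^(((k:ℝ)+1)-1) * (1-x)^((1-1/a)-1)) g (Set.Ioo 0 1) := by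
    intro x _
    have e1 : ((k:ℝ)+1)-1 = (k:ℝ) := by ring
    have e2 : (1-1/a)-1 = -(1/a) := by ring
    simp only [hg, e1, e2, Real.rpow_natCast]
  have hgint : IntegrableOn g (Set.Ioo 0 1) := by
    exact ((real_beta_integrable hu hv).mono_set Set.Ioo_subset_Ioc_self).congr_fun
      hEq measurableSet_Ioo
  have hgval : ∫ x in Set.Ioo (0:ℝ) 1, g x
      = Real.Gamma ((k:ℝ)+1) * Real.Gamma (1-1/a) / Real.Gamma (((k:ℝ)+1)+(1-1/a)) := by
    have hb := real_beta_integral hu hv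
    rw [intervalIntegral.integral_of_le zero_le_one, integral_Ioc_eq_integral_Ioo] at hb
    rw [← hb]
    exact (setIntegral_congr_fun measurableSet_Ioo hEq).symm
  have hcv := integral_image_eq_integral_abs_deriv_smul measurableSet_Ioi hderiv hinj g
  rw [himg, setIntegral_congr_fun measurableSet_Ioi hcong, MeasureTheory.integral_const_mul] at hcv
  have hint1 : IntegrableOn (fun t => |F' t| • g (f t)) (Set.Ioi s) := by
    rw [← integrableOn_image_iff_integrableOn_abs_deriv_smul measurableSet_Ioi hderiv hinj g]
    rw [himg]; exact hgint
  have hint2 : IntegrableOn (fun t => (a/s) * ((t/s)^(-a) * (1-(t/s)^(-a))^k)) (Set.Ioi s) :=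
    hint1.congr_fun hcong measurableSet_Ioi
  constructor
  · exact MeasureTheory.IntegrableOn.congr_fun (hint2.const_mul (s/a))
      (fun t _ => by field_simp) measurableSet_Ioi
  · have hone : s/a*(a/s) = 1 := by field_simp
    rw [← hgval, hcv, ← mul_assoc, hone, one_mul]

lemma pareto_tail_integral (s a : ℝ) (hs : 0 < s) (ha : 1 < a) (B : ℕ) :
    IntegrableOn (fun t => 1 - (1-(t/s)^(-a))^B) (Set.Ioi s) volume ∧
    ∫ t in Set.Ioi s, (1 - (1-(t/s)^(-a))^B)
      = s * (Real.Gamma ((B:ℝ)+1) * Real.Gamma (1-1/a) / Real.Gamma ((B:ℝ)+1-1/a)) - s := by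
  have ha0 : (0:ℝ) < a := by linarith
  have hv : (0:ℝ) < 1-1/a := by rw [sub_pos, div_lt_one ha0]; exact ha
  set G : ℕ → ℝ := fun k =>
    Real.Gamma ((k:ℝ)+1) * Real.Gamma (1-1/a) / Real.Gamma ((k:ℝ)+1-1/a) with hG
  have hstep : ∀ k : ℕ,
      (s/a) * (Real.Gamma ((k:ℝ)+1) * Real.Gamma (1-1/a)
          / Real.Gamma (((k:ℝ)+1)+(1-1/a))) = s * (G (k+1) - G k) := by
    intro k
    have hx : (0:ℝ) < (k:ℝ)+1-1/a := by
      have : 1/a < 1 := by rw [div_lt_one ha0]; exact ha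
      have : (0:ℝ) ≤ (k:ℝ) := Nat.cast_nonneg k
      linarith
    have hy : (0:ℝ) < (k:ℝ)+1 := by positivity
    have e1 : Real.Gamma ((k:ℝ)+1+1) = ((k:ℝ)+1) * Real.Gamma ((k:ℝ)+1) :=
      Real.Gamma_add_one hy.ne'
    have e2 : Real.Gamma (((k:ℝ)+1-1/a)+1) = ((k:ℝ)+1-1/a) * Real.Gamma ((k:ℝ)+1-1/a) :=
      Real.Gamma_add_one hx.ne'
    have hne1 : Real.Gamma ((k:ℝ)+1-1/a) ≠ 0 := (Real.Gamma_pos_of_pos hx).ne'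
    simp only [hG]
    push_cast
    have e3 : ((k:ℝ)+1)+(1-1/a) = ((k:ℝ)+1-1/a)+1 := by ring
    have e4 : (k:ℝ)+1+1-1/a = ((k:ℝ)+1-1/a)+1 := by ring
    rw [e3, e4, e2]
    rw [show (k:ℝ)+1+1 = ((k:ℝ)+1)+1 by ring, e1]
    set P := Real.Gamma ((k:ℝ)+1) with hP
    set C := Real.Gamma (1-1/a) with hC
    set Q := Real.Gamma ((k:ℝ)+1-1/a) with hQ
    have hfrac : ((k:ℝ)+1)/((k:ℝ)+1-1/a) - 1 = 1/(a*((k:ℝ)+1-1/a)) := by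
      rw [div_sub_one hx.ne', show ((k:ℝ)+1) - ((k:ℝ)+1-1/a) = 1/a by ring, div_div]
    have hGk1 : ((k:ℝ)+1) * P * C / (((k:ℝ)+1-1/a) * Q)
        = (((k:ℝ)+1)/((k:ℝ)+1-1/a)) * (P*C/Q) := by
      rw [mul_assoc, mul_div_mul_comm]
    rw [hGk1, div_mul_eq_div_div_swap]
    rw [show ((k:ℝ)+1)/((k:ℝ)+1-1/a) * (P*C/Q) - P*C/Q
        = (((k:ℝ)+1)/((k:ℝ)+1-1/a) - 1) * (P*C/Q) by ring, hfrac]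
    rw [div_mul_eq_div_div]
    ring
  have hgeom : ∀ q : ℝ, 1 - (1-q)^B = ∑ k ∈ Finset.range B, q * (1-q)^k := by
    intro q
    have := geom_sum_mul (x := 1-q) (n := B)
    have h2 : ∑ k ∈ Finset.range B, q * (1-q)^k
        = -((∑ k ∈ Finset.range B, (1-q)^k) * ((1-q) - 1)) := by
      rw [Finset.sum_mul, ← Finset.sum_neg_distrib]
      apply Finset.sum_congr rfl
      intro k _
      ring
    rw [h2, this]
    ring
  have hint : ∀ k : ℕ, IntegrableOn
      (fun t => (t/s)^(-a) * (1-(t/s)^(-a))^k) (Set.Ioi s) volume :=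
    fun k => (pareto_sub s a hs ha k).1
  have hfun : Set.EqOn (fun t => 1 - (1-(t/s)^(-a))^B)
      (fun t => ∑ k ∈ Finset.range B, (t/s)^(-a) * (1-(t/s)^(-a))^k) (Set.Ioi s) := by
    intro t _
    exact hgeom ((t/s)^(-a))
  have hsumint : IntegrableOn
      (fun t => ∑ k ∈ Finset.range B, (t/s)^(-a) * (1-(t/s)^(-a))^k) (Set.Ioi s) volume :=
    integrable_finset_sum _ (fun k _ => hint k)
  constructor
  · exact hsumint.congr_fun (fun t ht => (hfun ht).symm) measurableSet_Ioi
  · rw [setIntegral_congr_fun measurableSet_Ioi hfun,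
      integral_finset_sum _ (fun k _ => hint k)]
    have : ∀ k ∈ Finset.range B, (∫ t in Set.Ioi s, (t/s)^(-a) * (1-(t/s)^(-a))^k)
        = s * (G (k+1) - G k) := by
      intro k _
      rw [(pareto_sub s a hs ha k).2, hstep]
    rw [Finset.sum_congr rfl this, ← Finset.mul_sum, Finset.sum_range_sub]
    have hG0 : G 0 = 1 := by
      simp only [hG]
      norm_num [Real.Gamma_one]
      have h01 : (0:ℝ) < 1 - a⁻¹ := by rw [show a⁻¹ = 1/a by rw [one_div]]; exact hv
      exact (Real.Gamma_pos_of_pos h01).ne'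
    rw [hG0]
    simp only [hG]
    ring

/-- If `T 0, …, T (B-1)` are i.i.d. Pareto(s, a) random variables with scale `s > 0` and shape
`a > 1` (CDF `F(t) = 0` for `t < s` and `F(t) = 1 - (t/s)^{-a}` for `t ≥ s`), then
`E[max_i T i] = s · Γ(B+1) · Γ(1 − 1/a) / Γ(B + 1 − 1/a)`. -/
theorem expected_max_pareto
    {Ω : Type*} [MeasureSpace Ω] [IsProbabilityMeasure (ℙ : Measure Ω)]
    (s a : ℝ) (hs : 0 < s) (ha : 1 < a) (B : ℕ) (hB : 1 ≤ B)
    (T : Fin B → Ω → ℝ) (hmeas : ∀ i, Measurable (T i))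
    (hindep : iIndepFun T ℙ)
    (hcdf : ∀ i t, ℙ {ω | T i ω ≤ t} =
      ENNReal.ofReal (if t < s then 0 else 1 - (t / s) ^ (-a))) :
    (∫ ω, Finset.univ.sup' ⟨⟨0, hB⟩, Finset.mem_univ _⟩ fun i => T i ω)
      = s * Real.Gamma ((B : ℝ) + 1) * Real.Gamma (1 - 1 / a)
          / Real.Gamma ((B : ℝ) + 1 - 1 / a) := by
  have ha0 : (0:ℝ) < a := by linarith
  have hBne : B ≠ 0 := by omega
  set i₀ : Fin B := ⟨0, hB⟩ with hi₀
  set M : Ω → ℝ := fun ω => Finset.univ.sup' ⟨i₀, Finset.mem_univ _⟩ fun i => T i ω with hM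
  set F : ℝ → ℝ := fun t => if t < s then 0 else 1 - (t/s)^(-a) with hF
  have hF0 : ∀ t, 0 ≤ F t := by
    intro t
    simp only [hF]
    split_ifs with h
    · exact le_refl 0
    · push_neg at h
      have h1 : (1:ℝ) ≤ t/s := (one_le_div hs).mpr h
      have := Real.rpow_le_one_of_one_le_of_nonpos h1 (neg_nonpos.mpr ha0.le)
      linarith
  have hMmeas : Measurable M := by
    have hMe : M = Finset.univ.sup' ⟨i₀, Finset.mem_univ _⟩ T := by
      funext ω; exact (Finset.sup'_apply (s := Finset.univ) (f := T) _ ω).symm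
    rw [hMe]
    exact Finset.measurable_sup' _ (fun i _ => hmeas i)
  -- CDF of the max
  have hcdfM : ∀ t, ℙ {ω | M ω ≤ t} = ENNReal.ofReal ((F t)^B) := by
    intro t
    have hset : {ω | M ω ≤ t} = ⋂ i ∈ Finset.univ, T i ⁻¹' Set.Iic t := by
      ext ω
      simp [hM, Finset.sup'_le_iff]
      exact (Finset.sup'_le_iff (s := Finset.univ) (f := fun i => T i ω) _).trans (by simp)
    rw [hset, hindep.measure_inter_preimage_eq_mul Finset.univ
      (sets := fun _ => Set.Iic t) (fun i _ => measurableSet_Iic)]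
    have : ∀ i : Fin B, ℙ (T i ⁻¹' Set.Iic t) = ENNReal.ofReal (F t) := by
      intro i
      have : T i ⁻¹' Set.Iic t = {ω | T i ω ≤ t} := rfl
      rw [this, hcdf i t]
    rw [Finset.prod_congr rfl (fun i _ => this i), Finset.prod_const,
      Finset.card_univ, Fintype.card_fin, ← ENNReal.ofReal_pow (hF0 t)]
  -- a.e. nonneg
  have hM0 : 0 ≤ᵐ[ℙ] M := by
    have hnull : ℙ {ω | T i₀ ω ≤ 0} = 0 := by
      rw [hcdf i₀ 0, if_pos hs]
      simp
    rw [Filter.EventuallyLE, ae_iff]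
    apply measure_mono_null _ hnull
    intro ω hω
    simp only [Set.mem_setOf_eq, Pi.zero_apply, not_le] at hω ⊢
    have := Finset.le_sup' (fun i => T i ω) (Finset.mem_univ i₀)
    linarith
  -- expectation via layer cake
  rw [show integral ℙ M = ∫ ω, M ω from rfl,
    integral_eq_lintegral_of_nonneg_ae hM0 hMmeas.aestronglyMeasurable,
    lintegral_eq_lintegral_meas_lt ℙ hM0 hMmeas.aemeasurable]
  -- tail probability
  have htail : ∀ t : ℝ, ℙ {ω | t < M ω} = ENNReal.ofReal (1 - (F t)^B) := by
    intro t
    have hcompl : {ω | t < M ω} = {ω | M ω ≤ t}ᶜ := by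
      ext ω; simp
    have hms : MeasurableSet {ω | M ω ≤ t} := measurableSet_le hMmeas measurable_const
    rw [hcompl, prob_compl_eq_one_sub hms, hcdfM t,
      ← ENNReal.ofReal_one, ← ENNReal.ofReal_sub _ (pow_nonneg (hF0 t) B)]
  simp only [htail]
  -- split the domain
  rw [← Set.Ioc_union_Ioi_eq_Ioi hs.le,
    lintegral_union measurableSet_Ioi (Set.Ioc_disjoint_Ioi le_rfl)]
  -- piece on (0, s]
  have h1 : ∀ t ∈ Set.Ioc (0:ℝ) s, ENNReal.ofReal (1 - F t ^ B) = 1 := by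
    intro t ht
    have hFt : F t = 0 := by
      simp only [hF]
      split_ifs with h
      · rfl
      · push_neg at h
        have : t = s := le_antisymm ht.2 h
        rw [this, div_self hs.ne', Real.one_rpow]; ring
    rw [hFt, zero_pow hBne, sub_zero, ENNReal.ofReal_one]
  rw [setLIntegral_congr_fun measurableSet_Ioc h1, setLIntegral_const,
    one_mul, Real.volume_Ioc, sub_zero]
  -- piece on (s, ∞)
  have h2e : ∀ t ∈ Set.Ioi (s:ℝ),
      ENNReal.ofReal (1 - F t ^ B) = ENNReal.ofReal (1 - (1-(t/s)^(-a))^B) := by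
    intro t ht
    have : ¬ t < s := not_lt.mpr (le_of_lt ht)
    simp only [hF, if_neg this]
  rw [setLIntegral_congr_fun measurableSet_Ioi h2e]
  have hTI := pareto_tail_integral s a hs ha B
  have hnnpt : ∀ t ∈ Set.Ioi s, 0 ≤ 1 - (1-(t/s)^(-a))^B := by
    intro t ht
    have h1t : 1 < t/s := (one_lt_div hs).mpr ht
    have hq0 : 0 < (t/s)^(-a) := Real.rpow_pos_of_pos (by linarith) _
    have hq1 : (t/s)^(-a) < 1 :=
      Real.rpow_lt_one_of_one_lt_of_neg h1t (by linarith)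
    have h01 : (0:ℝ) ≤ 1 - (t/s)^(-a) := by linarith
    have := pow_le_one₀ h01 (by linarith : 1 - (t/s)^(-a) ≤ 1) (n := B)
    linarith
  have hnn : 0 ≤ᵐ[volume.restrict (Set.Ioi s)] fun t => 1 - (1-(t/s)^(-a))^B := by
    filter_upwards [ae_restrict_mem measurableSet_Ioi] with t ht
    exact hnnpt t ht
  rw [← ofReal_integral_eq_lintegral_ofReal hTI.1 hnn, hTI.2]
  have hX : 0 ≤ s * (Real.Gamma ((B:ℝ)+1) * Real.Gamma (1-1/a)
      / Real.Gamma ((B:ℝ)+1-1/a)) - s := by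
    rw [← hTI.2]
    exact setIntegral_nonneg measurableSet_Ioi hnnpt
  rw [← ENNReal.ofReal_add hs.le hX, ENNReal.toReal_ofReal (by linarith)]
  ring
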